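/- Let σ₁ > 0 and σ₂ > 0 and let Φ : X × Y → ℝ. Then the infimum over all pairs of functions U, V : X × Y → ℝ satisfying U(x,y) + V(x,y) ≥ Φ(x,y) for all (x,y) of the quantity σ₁ Σ_x p(x) log(Σ_y exp(U(x,y)/σ₁)) + σ₂ Σ_y q(y) log(Σ_x exp(V(x,y)/σ₂)) is equal to max_{π ∈ M(p,q)} [Σ_{x,y} π(x,y) Φ(x,y) − (σ₁+σ₂) I(π)] + σ₁ S(q) + σ₂ S(p), and the maximum on the right-hand side is attained. -/

import Mathlib

open Finset Real

/-- A coupling of the probability mass functions `p` and `q`. -/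
def IsCoupling {X Y : Type*} [Fintype X] [Fintype Y]
    (p : X → ℝ) (q : Y → ℝ) (μ : X × Y → ℝ) : Prop :=
  (∀ z, 0 ≤ μ z) ∧ (∀ x, ∑ y, μ (x, y) = p x) ∧ (∀ y, ∑ x, μ (x, y) = q y)

/-- Mutual information of a coupling (with `0 log 0 = 0`, which holds since `Real.log 0 = 0`). -/
noncomputable def mutualInfo {X Y : Type*} [Fintype X] [Fintype Y]
    (p : X → ℝ) (q : Y → ℝ) (μ : X × Y → ℝ) : ℝ :=
  ∑ x, ∑ y, μ (x, y) * Real.log (μ (x, y) / (p x * q y))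

/-- Shannon entropy of a probability mass function. -/
noncomputable def entropy {Z : Type*} [Fintype Z] (p : Z → ℝ) : ℝ :=
  -∑ z, p z * Real.log (p z)

lemma sum_exp_pos' {ι : Type*} [Fintype ι] [Nonempty ι] (a : ι → ℝ) :
    0 < ∑ i, Real.exp (a i) :=
  Finset.sum_pos (fun i _ => Real.exp_pos _) Finset.univ_nonempty

lemma gibbs' {ι : Type*} [Fintype ι] [Nonempty ι] (a r : ι → ℝ)
    (hr : ∀ i, 0 ≤ r i) (hs : ∑ i, r i = 1) :
    ∑ i, r i * a i - ∑ i, r i * Real.log (r i) ≤ Real.log (∑ i, Real.exp (a i)) := by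
  set Z := ∑ i, Real.exp (a i) with hZdef
  have hZ : 0 < Z := sum_exp_pos' a
  have key : ∀ i, r i * a i - r i * Real.log (r i)
      ≤ Real.exp (a i) / Z - r i + r i * Real.log Z := by
    intro i
    rcases (hr i).eq_or_lt with h | h
    · rw [← h]
      simp only [zero_mul, Real.log_zero, mul_zero, sub_zero, zero_add, sub_zero]
      positivity
    · have h1 : a i - Real.log (r i) - Real.log Z + 1 ≤ Real.exp (a i) / (r i * Z) := by
        have h2 := Real.add_one_le_exp (a i - Real.log (r i) - Real.log Z)
        rwa [Real.exp_sub, Real.exp_sub, Real.exp_log h, Real.exp_log hZ, div_div] at h2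
      have h3 : r i * (a i - Real.log (r i) - Real.log Z + 1) ≤ Real.exp (a i) / Z := by
        have h4 := mul_le_mul_of_nonneg_left h1 h.le
        rwa [show r i * (Real.exp (a i) / (r i * Z)) = Real.exp (a i) / Z by
          field_simp] at h4
      nlinarith [h3]
  calc ∑ i, r i * a i - ∑ i, r i * Real.log (r i)
      = ∑ i, (r i * a i - r i * Real.log (r i)) := by rw [Finset.sum_sub_distrib]
    _ ≤ ∑ i, (Real.exp (a i) / Z - r i + r i * Real.log Z) :=
        Finset.sum_le_sum fun i _ => key i
    _ = (∑ i, Real.exp (a i)) / Z - (∑ i, r i) + (∑ i, r i) * Real.log Z := by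
        rw [Finset.sum_add_distrib, Finset.sum_sub_distrib, Finset.sum_div, Finset.sum_mul]
    _ = Real.log Z := by rw [← hZdef, div_self hZ.ne', hs]; ring

lemma log_split {m a b : ℝ} (hm : 0 ≤ m) (ha : 0 < a) (hb : 0 < b) :
    m * Real.log (m / (a * b)) = m * Real.log (m / a) - m * Real.log b := by
  rcases hm.eq_or_lt with h | h
  · simp [← h]
  · rw [Real.log_div h.ne' (by positivity), Real.log_div h.ne' ha.ne',
      Real.log_mul ha.ne' hb.ne']
    ring

lemma weak_duality {X Y : Type*} [Fintype X] [Fintype Y] [Nonempty X] [Nonempty Y]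
    (p : X → ℝ) (q : Y → ℝ) (hp : ∀ x, 0 < p x) (hq : ∀ y, 0 < q y)
    (hps : ∑ x, p x = 1) (hqs : ∑ y, q y = 1)
    (σ₁ σ₂ : ℝ) (hσ₁ : 0 < σ₁) (hσ₂ : 0 < σ₂) (Φ U V : X × Y → ℝ)
    (hUV : ∀ x y, Φ (x, y) ≤ U (x, y) + V (x, y)) (μ : X × Y → ℝ)
    (hμ : IsCoupling p q μ) :
    (∑ x, ∑ y, μ (x, y) * Φ (x, y)) - (σ₁ + σ₂) * mutualInfo p q μ
      + σ₁ * entropy q + σ₂ * entropy p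
    ≤ σ₁ * ∑ x, p x * Real.log (∑ y, Real.exp (U (x, y) / σ₁))
      + σ₂ * ∑ y, q y * Real.log (∑ x, Real.exp (V (x, y) / σ₂)) := by
  obtain ⟨hμ0, hμp, hμq⟩ := hμ
  -- Gibbs bound in x-direction
  have hA : ∀ x : X, (∑ y, μ (x, y) * U (x, y))
      - σ₁ * ∑ y, μ (x, y) * Real.log (μ (x, y) / p x)
      ≤ σ₁ * (p x * Real.log (∑ y, Real.exp (U (x, y) / σ₁))) := by
    intro x
    have hg := gibbs' (fun y => U (x, y) / σ₁) (fun y => μ (x, y) / p x)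
      (fun y => div_nonneg (hμ0 _) (hp x).le)
      (by rw [← Finset.sum_div, hμp x, div_self (hp x).ne'])
    have h2 := mul_le_mul_of_nonneg_left hg (mul_nonneg hσ₁.le (hp x).le)
    calc (∑ y, μ (x, y) * U (x, y)) - σ₁ * ∑ y, μ (x, y) * Real.log (μ (x, y) / p x)
        = σ₁ * p x * ((∑ y, μ (x, y) / p x * (U (x, y) / σ₁))
          - ∑ y, μ (x, y) / p x * Real.log (μ (x, y) / p x)) := by
          rw [mul_sub, Finset.mul_sum, Finset.mul_sum]
          have hpx := (hp x).ne'
          have hs1 := hσ₁.ne'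
          congr 1
          · exact Finset.sum_congr rfl fun y _ => by field_simp
          · rw [Finset.mul_sum]
            exact Finset.sum_congr rfl fun y _ => by field_simp
      _ ≤ σ₁ * p x * Real.log (∑ y, Real.exp (U (x, y) / σ₁)) := h2
      _ = σ₁ * (p x * Real.log (∑ y, Real.exp (U (x, y) / σ₁))) := by ring
  have hB : ∀ y : Y, (∑ x, μ (x, y) * V (x, y))
      - σ₂ * ∑ x, μ (x, y) * Real.log (μ (x, y) / q y)
      ≤ σ₂ * (q y * Real.log (∑ x, Real.exp (V (x, y) / σ₂))) := by
    intro y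
    have hg := gibbs' (fun x => V (x, y) / σ₂) (fun x => μ (x, y) / q y)
      (fun x => div_nonneg (hμ0 _) (hq y).le)
      (by rw [← Finset.sum_div, hμq y, div_self (hq y).ne'])
    have h2 := mul_le_mul_of_nonneg_left hg (mul_nonneg hσ₂.le (hq y).le)
    calc (∑ x, μ (x, y) * V (x, y)) - σ₂ * ∑ x, μ (x, y) * Real.log (μ (x, y) / q y)
        = σ₂ * q y * ((∑ x, μ (x, y) / q y * (V (x, y) / σ₂))
          - ∑ x, μ (x, y) / q y * Real.log (μ (x, y) / q y)) := by
          rw [mul_sub, Finset.mul_sum, Finset.mul_sum]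
          have hqy := (hq y).ne'
          have hs2 := hσ₂.ne'
          congr 1
          · exact Finset.sum_congr rfl fun x _ => by field_simp
          · rw [Finset.mul_sum]
            exact Finset.sum_congr rfl fun x _ => by field_simp
      _ ≤ σ₂ * q y * Real.log (∑ x, Real.exp (V (x, y) / σ₂)) := h2
      _ = σ₂ * (q y * Real.log (∑ x, Real.exp (V (x, y) / σ₂))) := by ring
  have hAs := Finset.sum_le_sum (fun x (_ : x ∈ Finset.univ) => hA x)
  have hBs := Finset.sum_le_sum (fun y (_ : y ∈ Finset.univ) => hB y)
  rw [Finset.sum_sub_distrib, ← Finset.mul_sum, ← Finset.mul_sum] at hAs hBs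
  -- identity for the x-direction relative entropy
  have hIA : ∑ x, ∑ y, μ (x, y) * Real.log (μ (x, y) / p x)
      = mutualInfo p q μ - entropy q := by
    have : ∀ x y, μ (x, y) * Real.log (μ (x, y) / p x)
        = μ (x, y) * Real.log (μ (x, y) / (p x * q y)) + μ (x, y) * Real.log (q y) := by
      intro x y
      have := log_split (hμ0 (x, y)) (hp x) (hq y)
      linarith
    calc ∑ x, ∑ y, μ (x, y) * Real.log (μ (x, y) / p x)
        = ∑ x, ∑ y, (μ (x, y) * Real.log (μ (x, y) / (p x * q y))
            + μ (x, y) * Real.log (q y)) := by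
          exact Finset.sum_congr rfl fun x _ => Finset.sum_congr rfl fun y _ => this x y
      _ = mutualInfo p q μ + ∑ x, ∑ y, μ (x, y) * Real.log (q y) := by
          rw [mutualInfo, ← Finset.sum_add_distrib]
          exact Finset.sum_congr rfl fun x _ => by rw [Finset.sum_add_distrib]
      _ = mutualInfo p q μ - entropy q := by
          rw [Finset.sum_comm]
          have : ∑ y, ∑ x, μ (x, y) * Real.log (q y) = ∑ y, q y * Real.log (q y) := by
            refine Finset.sum_congr rfl fun y _ => ?_
            rw [← Finset.sum_mul, hμq y]
          rw [this, entropy]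
          ring
  have hIB : ∑ y, ∑ x, μ (x, y) * Real.log (μ (x, y) / q y)
      = mutualInfo p q μ - entropy p := by
    have : ∀ x y, μ (x, y) * Real.log (μ (x, y) / q y)
        = μ (x, y) * Real.log (μ (x, y) / (p x * q y)) + μ (x, y) * Real.log (p x) := by
      intro x y
      have h := log_split (hμ0 (x, y)) (hq y) (hp x)
      rw [mul_comm (q y) (p x)] at h
      linarith
    calc ∑ y, ∑ x, μ (x, y) * Real.log (μ (x, y) / q y)
        = ∑ y, ∑ x, (μ (x, y) * Real.log (μ (x, y) / (p x * q y))
            + μ (x, y) * Real.log (p x)) := by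
          exact Finset.sum_congr rfl fun y _ => Finset.sum_congr rfl fun x _ => this x y
      _ = (∑ y, ∑ x, μ (x, y) * Real.log (μ (x, y) / (p x * q y)))
            + ∑ y, ∑ x, μ (x, y) * Real.log (p x) := by
          rw [← Finset.sum_add_distrib]
          exact Finset.sum_congr rfl fun y _ => by rw [Finset.sum_add_distrib]
      _ = mutualInfo p q μ + ∑ y, ∑ x, μ (x, y) * Real.log (p x) := by
          rw [mutualInfo, Finset.sum_comm]
      _ = mutualInfo p q μ - entropy p := by
          rw [Finset.sum_comm]
          have : ∑ x, ∑ y, μ (x, y) * Real.log (p x) = ∑ x, p x * Real.log (p x) := by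
            refine Finset.sum_congr rfl fun x _ => ?_
            rw [← Finset.sum_mul, hμp x]
          rw [this, entropy]
          ring
  have hUV' : ∑ x, ∑ y, μ (x, y) * Φ (x, y)
      ≤ (∑ x, ∑ y, μ (x, y) * U (x, y)) + ∑ y, ∑ x, μ (x, y) * V (x, y) := by
    rw [Finset.sum_comm (f := fun y x => μ (x, y) * V (x, y)), ← Finset.sum_add_distrib]
    refine Finset.sum_le_sum fun x _ => ?_
    rw [← Finset.sum_add_distrib]
    refine Finset.sum_le_sum fun y _ => ?_
    rw [← mul_add]
    exact mul_le_mul_of_nonneg_left (hUV x y) (hμ0 (x, y))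
  rw [hIA] at hAs
  rw [hIB] at hBs
  linarith

noncomputable def Gdual {X Y : Type*} [Fintype X] [Fintype Y]
    (p : X → ℝ) (q : Y → ℝ) (σ₁ σ₂ : ℝ) (Φ : X × Y → ℝ) (W : X × Y → ℝ) : ℝ :=
  σ₁ * ∑ x, p x * Real.log (∑ y, Real.exp (W (x, y) / σ₁))
    + σ₂ * ∑ y, q y * Real.log (∑ x, Real.exp ((Φ (x, y) - W (x, y)) / σ₂))

lemma sum_exp_pos'' {ι : Type*} [Fintype ι] [Nonempty ι] (a : ι → ℝ) :
    0 < ∑ i, Real.exp (a i) :=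
  Finset.sum_pos (fun i _ => Real.exp_pos _) Finset.univ_nonempty

lemma Gdual_continuous {X Y : Type*} [Fintype X] [Fintype Y] [Nonempty X] [Nonempty Y]
    (p : X → ℝ) (q : Y → ℝ) (σ₁ σ₂ : ℝ) (Φ : X × Y → ℝ) :
    Continuous (Gdual p q σ₁ σ₂ Φ) := by
  have hs1 : ∀ x : X, Continuous (fun W : X × Y → ℝ => ∑ y, Real.exp (W (x, y) / σ₁)) :=
    fun x => continuous_finset_sum _ fun y _ =>
      Real.continuous_exp.comp (by fun_prop : Continuous fun W : X × Y → ℝ => W (x, y) / σ₁)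
  have hs2 : ∀ y : Y, Continuous
      (fun W : X × Y → ℝ => ∑ x, Real.exp ((Φ (x, y) - W (x, y)) / σ₂)) :=
    fun y => continuous_finset_sum _ fun x _ =>
      Real.continuous_exp.comp (by fun_prop : Continuous fun W : X × Y → ℝ => (Φ (x, y) - W (x, y)) / σ₂)
  rw [continuous_iff_continuousAt]
  intro W
  have c1 : ∀ x : X, ContinuousAt
      (fun W : X × Y → ℝ => p x * Real.log (∑ y, Real.exp (W (x, y) / σ₁))) W := by
    intro x
    have hlog : ContinuousAt Real.log (∑ y, Real.exp (W (x, y) / σ₁)) :=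
      Real.continuousAt_log (sum_exp_pos'' fun y => W (x, y) / σ₁).ne'
    exact continuousAt_const.mul (ContinuousAt.comp (f := fun W : X × Y → ℝ => ∑ y, Real.exp (W (x, y) / σ₁)) hlog (hs1 x).continuousAt)
  have c2 : ∀ y : Y, ContinuousAt
      (fun W : X × Y → ℝ => q y * Real.log (∑ x, Real.exp ((Φ (x, y) - W (x, y)) / σ₂))) W := by
    intro y
    have hlog : ContinuousAt Real.log (∑ x, Real.exp ((Φ (x, y) - W (x, y)) / σ₂)) :=
      Real.continuousAt_log (sum_exp_pos'' fun x => (Φ (x, y) - W (x, y)) / σ₂).ne'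
    exact continuousAt_const.mul (ContinuousAt.comp (f := fun W : X × Y → ℝ => ∑ x, Real.exp ((Φ (x, y) - W (x, y)) / σ₂)) hlog (hs2 y).continuousAt)
  exact (continuousAt_const.mul (tendsto_finset_sum _ fun x _ => c1 x)).add
    (continuousAt_const.mul (tendsto_finset_sum _ fun y _ => c2 y))

lemma Gdual_shift {X Y : Type*} [Fintype X] [Fintype Y] [Nonempty X] [Nonempty Y]
    (p : X → ℝ) (q : Y → ℝ) (hps : ∑ x, p x = 1) (hqs : ∑ y, q y = 1)
    {σ₁ σ₂ : ℝ} (hσ₁ : 0 < σ₁) (hσ₂ : 0 < σ₂) (Φ : X × Y → ℝ) (W : X × Y → ℝ) (c : ℝ) :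
    Gdual p q σ₁ σ₂ Φ (fun z => W z - c) = Gdual p q σ₁ σ₂ Φ W := by
  unfold Gdual
  have h1 : ∀ x : X, Real.log (∑ y, Real.exp ((W (x, y) - c) / σ₁))
      = Real.log (∑ y, Real.exp (W (x, y) / σ₁)) - c / σ₁ := by
    intro x
    have : ∀ y : Y, Real.exp ((W (x, y) - c) / σ₁)
        = Real.exp (W (x, y) / σ₁) * Real.exp (-(c / σ₁)) := by
      intro y; rw [← Real.exp_add]; congr 1; field_simp; ring
    rw [Finset.sum_congr rfl fun y _ => this y, ← Finset.sum_mul,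
      Real.log_mul (sum_exp_pos'' _).ne' (Real.exp_pos _).ne', Real.log_exp]
    ring
  have h2 : ∀ y : Y, Real.log (∑ x, Real.exp ((Φ (x, y) - (W (x, y) - c)) / σ₂))
      = Real.log (∑ x, Real.exp ((Φ (x, y) - W (x, y)) / σ₂)) + c / σ₂ := by
    intro y
    have : ∀ x : X, Real.exp ((Φ (x, y) - (W (x, y) - c)) / σ₂)
        = Real.exp ((Φ (x, y) - W (x, y)) / σ₂) * Real.exp (c / σ₂) := by
      intro x; rw [← Real.exp_add]; congr 1; field_simp; ring
    rw [Finset.sum_congr rfl fun x _ => this x, ← Finset.sum_mul,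
      Real.log_mul (sum_exp_pos'' _).ne' (Real.exp_pos _).ne', Real.log_exp]
  simp only [h1, h2, mul_sub, mul_add]
  rw [Finset.sum_sub_distrib, Finset.sum_add_distrib, ← Finset.sum_mul, ← Finset.sum_mul,
    hps, hqs]
  field_simp
  ring

lemma osc_bound {X Y : Type*} [Fintype X] [Fintype Y] [Nonempty X] [Nonempty Y]
    (p : X → ℝ) (q : Y → ℝ) (hp : ∀ x, 0 < p x) (hq : ∀ y, 0 < q y)
    (hps : ∑ x, p x = 1) (hqs : ∑ y, q y = 1)
    {σ₁ σ₂ : ℝ} (hσ₁ : 0 < σ₁) (hσ₂ : 0 < σ₂) (Φ : X × Y → ℝ)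
    (Φm : ℝ) (hΦm : ∀ z, Φm ≤ Φ z) (c₀ : ℝ) (W : X × Y → ℝ)
    (hW : Gdual p q σ₁ σ₂ Φ W ≤ c₀) (x₀ : X) (y₀ : Y) (hz₀ : W (x₀, y₀) = 0) :
    ∀ z : X × Y, |W z| ≤ (c₀ - Φm) * ((∑ x, (p x)⁻¹) + ∑ y, (q y)⁻¹) := by
  classical
  set L₁ : X → ℝ := fun x => Real.log (∑ y, Real.exp (W (x, y) / σ₁)) with hL₁
  set L₂ : Y → ℝ := fun y => Real.log (∑ x, Real.exp ((Φ (x, y) - W (x, y)) / σ₂)) with hL₂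
  have hGW : σ₁ * (∑ x, p x * L₁ x) + σ₂ * (∑ y, q y * L₂ y) ≤ c₀ := hW
  choose xm hxmem hxm using fun y : Y =>
    Finset.exists_min_image Finset.univ (fun x => W (x, y)) Finset.univ_nonempty
  obtain ⟨ys, -, hys⟩ :=
    Finset.exists_max_image Finset.univ (fun y => W (xm y, y)) Finset.univ_nonempty
  set a := W (xm ys, ys) with ha
  have f1' : ∀ x y, W (x, y) / σ₁ ≤ L₁ x := by
    intro x y
    refine (Real.le_log_iff_exp_le (sum_exp_pos'' _)).mpr ?_
    exact Finset.single_le_sum (f := fun i => Real.exp (W (x, i) / σ₁))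
      (fun i _ => (Real.exp_pos _).le) (Finset.mem_univ y)
  have f1 : ∀ x, a / σ₁ ≤ L₁ x := fun x =>
    le_trans ((div_le_div_iff_of_pos_right hσ₁).mpr (hxm ys x (Finset.mem_univ x))) (f1' x ys)
  have f2' : ∀ x y, (Φm - W (x, y)) / σ₂ ≤ L₂ y := by
    intro x y
    refine le_trans ((div_le_div_iff_of_pos_right hσ₂).mpr (sub_le_sub_right (hΦm (x, y)) _)) ?_
    refine (Real.le_log_iff_exp_le (sum_exp_pos'' _)).mpr ?_
    exact Finset.single_le_sum (f := fun i => Real.exp ((Φ (i, y) - W (i, y)) / σ₂))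
      (fun i _ => (Real.exp_pos _).le) (Finset.mem_univ x)
  have f2 : ∀ y, (Φm - a) / σ₂ ≤ L₂ y := by
    intro y
    refine le_trans ((div_le_div_iff_of_pos_right hσ₂).mpr (sub_le_sub_left ?_ _)) (f2' (xm y) y)
    exact hys y (Finset.mem_univ y)
  -- upper key estimate
  have key_up : ∀ x y, p x * (W (x, y) - a) ≤ c₀ - Φm := by
    intro x y
    have h1 : p x * (W (x, y) / σ₁) + (1 - p x) * (a / σ₁) ≤ ∑ x', p x' * L₁ x' := by
      rw [← Finset.add_sum_erase _ _ (Finset.mem_univ x)]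
      refine add_le_add (mul_le_mul_of_nonneg_left (f1' x y) (hp x).le) ?_
      have e : (1 - p x) * (a / σ₁) = ∑ x' ∈ Finset.univ.erase x, p x' * (a / σ₁) := by
        rw [← Finset.sum_mul, Finset.sum_erase_eq_sub (Finset.mem_univ x), hps]
      rw [e]
      exact Finset.sum_le_sum fun x' _ => mul_le_mul_of_nonneg_left (f1 x') (hp x').le
    have h2 : (Φm - a) / σ₂ ≤ ∑ y', q y' * L₂ y' := by
      calc (Φm - a) / σ₂ = ∑ y', q y' * ((Φm - a) / σ₂) := by
            rw [← Finset.sum_mul, hqs, one_mul]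
        _ ≤ ∑ y', q y' * L₂ y' :=
            Finset.sum_le_sum fun y' _ => mul_le_mul_of_nonneg_left (f2 y') (hq y').le
    have e1 : σ₁ * (p x * (W (x, y) / σ₁) + (1 - p x) * (a / σ₁))
        = p x * W (x, y) + (1 - p x) * a := by field_simp
    have e2 : σ₂ * ((Φm - a) / σ₂) = Φm - a := by field_simp
    nlinarith [mul_le_mul_of_nonneg_left h1 hσ₁.le, mul_le_mul_of_nonneg_left h2 hσ₂.le]
  -- lower key estimate
  have key_low : ∀ x y, q y * (a - W (x, y)) ≤ c₀ - Φm := by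
    intro x y
    have h1 : a / σ₁ ≤ ∑ x', p x' * L₁ x' := by
      calc a / σ₁ = ∑ x', p x' * (a / σ₁) := by rw [← Finset.sum_mul, hps, one_mul]
        _ ≤ ∑ x', p x' * L₁ x' :=
            Finset.sum_le_sum fun x' _ => mul_le_mul_of_nonneg_left (f1 x') (hp x').le
    have h2 : q y * ((Φm - W (x, y)) / σ₂) + (1 - q y) * ((Φm - a) / σ₂)
        ≤ ∑ y', q y' * L₂ y' := by
      rw [← Finset.add_sum_erase _ _ (Finset.mem_univ y)]
      refine add_le_add (mul_le_mul_of_nonneg_left (f2' x y) (hq y).le) ?_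
      have e : (1 - q y) * ((Φm - a) / σ₂)
          = ∑ y' ∈ Finset.univ.erase y, q y' * ((Φm - a) / σ₂) := by
        rw [← Finset.sum_mul, Finset.sum_erase_eq_sub (Finset.mem_univ y), hqs]
      rw [e]
      exact Finset.sum_le_sum fun y' _ => mul_le_mul_of_nonneg_left (f2 y') (hq y').le
    have e1 : σ₁ * (a / σ₁) = a := by field_simp
    have e2 : σ₂ * (q y * ((Φm - W (x, y)) / σ₂) + (1 - q y) * ((Φm - a) / σ₂))
        = q y * (Φm - W (x, y)) + (1 - q y) * (Φm - a) := by field_simp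
    nlinarith [mul_le_mul_of_nonneg_left h1 hσ₁.le, mul_le_mul_of_nonneg_left h2 hσ₂.le]
  have hK : 0 ≤ c₀ - Φm := by
    have := key_up (xm ys) ys
    rw [← ha, sub_self, mul_zero] at this
    exact this
  set K := c₀ - Φm with hKdef
  have hainv : a ≤ K / q y₀ := by
    have h := key_low x₀ y₀
    rw [hz₀, sub_zero] at h
    exact (le_div_iff₀ (hq y₀)).mpr (by nlinarith [h])
  have hainv' : -(K / p x₀) ≤ a := by
    have h := key_up x₀ y₀
    rw [hz₀, zero_sub] at h
    have h2 : -a ≤ K / p x₀ := (le_div_iff₀ (hp x₀)).mpr (by nlinarith [h])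
    linarith
  rintro ⟨x, y⟩
  have hup : W (x, y) ≤ a + K / p x := by
    have := key_up x y
    have h := (le_div_iff₀ (hp x)).mpr (by nlinarith [this] : (W (x, y) - a) * p x ≤ K)
    linarith
  have hlow : a - K / q y ≤ W (x, y) := by
    have := key_low x y
    have h := (le_div_iff₀ (hq y)).mpr (by nlinarith [this] : (a - W (x, y)) * q y ≤ K)
    linarith
  have hpsum : ∀ x' : X, (p x')⁻¹ ≤ ∑ x'', (p x'')⁻¹ := fun x' =>
    Finset.single_le_sum (fun i _ => (inv_nonneg.mpr (hp i).le)) (Finset.mem_univ x')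
  have hqsum : ∀ y' : Y, (q y')⁻¹ ≤ ∑ y'', (q y'')⁻¹ := fun y' =>
    Finset.single_le_sum (fun i _ => (inv_nonneg.mpr (hq i).le)) (Finset.mem_univ y')
  have hpos : ∀ x' : X, K / p x' ≤ K * ∑ x'', (p x'')⁻¹ := by
    intro x'
    rw [div_eq_mul_inv]
    exact mul_le_mul_of_nonneg_left (hpsum x') hK
  have hqos : ∀ y' : Y, K / q y' ≤ K * ∑ y'', (q y'')⁻¹ := by
    intro y'
    rw [div_eq_mul_inv]
    exact mul_le_mul_of_nonneg_left (hqsum y') hK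
  rw [abs_le]
  constructor
  · have := hqos y
    have := hpos x₀
    nlinarith [hlow, hainv', hqos y, hpos x₀]
  · nlinarith [hup, hainv, hpos x, hqos y₀]

lemma exists_minimizer {X Y : Type*} [Fintype X] [Fintype Y] [Nonempty X] [Nonempty Y]
    (p : X → ℝ) (q : Y → ℝ) (hp : ∀ x, 0 < p x) (hq : ∀ y, 0 < q y)
    (hps : ∑ x, p x = 1) (hqs : ∑ y, q y = 1)
    {σ₁ σ₂ : ℝ} (hσ₁ : 0 < σ₁) (hσ₂ : 0 < σ₂) (Φ : X × Y → ℝ) :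
    ∃ U : X × Y → ℝ, ∀ W : X × Y → ℝ, Gdual p q σ₁ σ₂ Φ U ≤ Gdual p q σ₁ σ₂ Φ W := by
  obtain ⟨zm, -, hzm⟩ :=
    Finset.exists_min_image Finset.univ Φ Finset.univ_nonempty
  set Φm := Φ zm with hΦmdef
  have hΦm : ∀ z, Φm ≤ Φ z := fun z => hzm z (Finset.mem_univ z)
  obtain ⟨x₀⟩ := (inferInstance : Nonempty X)
  obtain ⟨y₀⟩ := (inferInstance : Nonempty Y)
  set c₀ := Gdual p q σ₁ σ₂ Φ (fun _ => 0) with hc₀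
  set R := (c₀ - Φm) * ((∑ x, (p x)⁻¹) + ∑ y, (q y)⁻¹) with hR
  have hR0 : 0 ≤ R := by
    have := osc_bound p q hp hq hps hqs hσ₁ hσ₂ Φ Φm hΦm c₀ (fun _ => 0) le_rfl x₀ y₀ rfl
      (x₀, y₀)
    simpa using this
  set S : Set (X × Y → ℝ) := Set.Icc (fun _ => -R) (fun _ => R) with hS
  have hScompact : IsCompact S := isCompact_Icc
  have h0S : (fun _ : X × Y => (0:ℝ)) ∈ S :=
    ⟨fun z => by simpa using neg_nonpos_of_nonneg hR0, fun z => by simpa using hR0⟩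
  obtain ⟨U, hUS, hUmin⟩ := hScompact.exists_isMinOn ⟨_, h0S⟩
    (Gdual_continuous p q σ₁ σ₂ Φ).continuousOn
  refine ⟨U, fun W => ?_⟩
  set W' : X × Y → ℝ := fun z => W z - W (x₀, y₀) with hW'
  have hWW' : Gdual p q σ₁ σ₂ Φ W' = Gdual p q σ₁ σ₂ Φ W :=
    Gdual_shift p q hps hqs hσ₁ hσ₂ Φ W (W (x₀, y₀))
  rcases le_or_gt (Gdual p q σ₁ σ₂ Φ U) (Gdual p q σ₁ σ₂ Φ W') with h | h
  · rwa [hWW'] at h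
  · exfalso
    have hle0 : Gdual p q σ₁ σ₂ Φ W' ≤ c₀ := le_of_lt (lt_of_lt_of_le h (hUmin h0S))
    have hmem : W' ∈ S := by
      have hb := osc_bound p q hp hq hps hqs hσ₁ hσ₂ Φ Φm hΦm c₀ W' hle0 x₀ y₀
        (by simp [hW']) 
      constructor
      · intro z
        have := abs_le.mp (hb z)
        simpa [hR] using this.1
      · intro z
        have := abs_le.mp (hb z)
        simpa [hR] using this.2
    exact absurd (hUmin hmem) (not_le.mpr h)

lemma stationarity {X Y : Type*} [Fintype X] [Fintype Y] [Nonempty X] [Nonempty Y]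
    (p : X → ℝ) (q : Y → ℝ) (σ₁ σ₂ : ℝ) (hσ₁ : 0 < σ₁) (hσ₂ : 0 < σ₂) (Φ : X × Y → ℝ)
    (U : X × Y → ℝ)
    (hmin : ∀ W : X × Y → ℝ, Gdual p q σ₁ σ₂ Φ U ≤ Gdual p q σ₁ σ₂ Φ W)
    (x : X) (y : Y) :
    p x * Real.exp (U (x, y) / σ₁) / (∑ y', Real.exp (U (x, y') / σ₁))
      = q y * Real.exp ((Φ (x, y) - U (x, y)) / σ₂)
        / (∑ x', Real.exp ((Φ (x', y) - U (x', y)) / σ₂)) := by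
  classical
  set δ : X × Y → ℝ := fun z => if z = (x, y) then 1 else 0 with hδ
  set g : ℝ → ℝ := fun t => Gdual p q σ₁ σ₂ Φ (fun z => U z + t * δ z) with hg
  have hglmin : IsLocalMin g 0 := by
    apply Filter.Eventually.of_forall
    intro t
    have : g 0 = Gdual p q σ₁ σ₂ Φ U := by
      simp only [hg, zero_mul, add_zero]
    rw [this]
    exact hmin _
  -- derivative of the first inner sums
  have hL1 : ∀ x' : X, HasDerivAt
      (fun t => Real.log (∑ y', Real.exp ((U (x', y') + t * δ (x', y')) / σ₁)))
      ((∑ y', Real.exp (U (x', y') / σ₁) * (δ (x', y') / σ₁))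
        / (∑ y', Real.exp (U (x', y') / σ₁))) 0 := by
    intro x'
    have hsum : HasDerivAt
        (fun t => ∑ y', Real.exp ((U (x', y') + t * δ (x', y')) / σ₁))
        (∑ y', Real.exp (U (x', y') / σ₁) * (δ (x', y') / σ₁)) 0 := by
      apply HasDerivAt.fun_sum
      intro y' _
      have h0 : HasDerivAt (fun t : ℝ => (U (x', y') + t * δ (x', y')) / σ₁)
          (δ (x', y') / σ₁) 0 := by
        simpa using
          (((hasDerivAt_id (0:ℝ)).mul_const (δ (x', y'))).const_add (U (x', y'))).div_const σ₁
      have h1 := h0.exp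
      simpa using h1
    have hne : (∑ y', Real.exp ((U (x', y') + 0 * δ (x', y')) / σ₁)) ≠ 0 := by
      simpa using (sum_exp_pos'' fun y' => U (x', y') / σ₁).ne'
    have := hsum.log hne
    simpa using this
  have hL2 : ∀ y' : Y, HasDerivAt
      (fun t => Real.log (∑ x', Real.exp ((Φ (x', y') - (U (x', y') + t * δ (x', y'))) / σ₂)))
      ((∑ x', Real.exp ((Φ (x', y') - U (x', y')) / σ₂) * (-δ (x', y') / σ₂))
        / (∑ x', Real.exp ((Φ (x', y') - U (x', y')) / σ₂))) 0 := by
    intro y'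
    have hsum : HasDerivAt
        (fun t => ∑ x', Real.exp ((Φ (x', y') - (U (x', y') + t * δ (x', y'))) / σ₂))
        (∑ x', Real.exp ((Φ (x', y') - U (x', y')) / σ₂) * (-δ (x', y') / σ₂)) 0 := by
      apply HasDerivAt.fun_sum
      intro x' _
      have h0 : HasDerivAt (fun t : ℝ => (Φ (x', y') - (U (x', y') + t * δ (x', y'))) / σ₂)
          (-δ (x', y') / σ₂) 0 := by
        have := (((hasDerivAt_id (0:ℝ)).mul_const (δ (x', y'))).const_add
          (U (x', y'))).const_sub (Φ (x', y'))
        simpa using this.div_const σ₂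
      have h1 := h0.exp
      simpa using h1
    have hne : (∑ x', Real.exp ((Φ (x', y') - (U (x', y') + 0 * δ (x', y'))) / σ₂)) ≠ 0 := by
      simpa using (sum_exp_pos'' fun x' => (Φ (x', y') - U (x', y')) / σ₂).ne'
    have := hsum.log hne
    simpa using this
  have hgderiv : HasDerivAt g
      (σ₁ * ∑ x', p x' * ((∑ y', Real.exp (U (x', y') / σ₁) * (δ (x', y') / σ₁))
        / (∑ y', Real.exp (U (x', y') / σ₁)))
      + σ₂ * ∑ y', q y' * ((∑ x', Real.exp ((Φ (x', y') - U (x', y')) / σ₂) * (-δ (x', y') / σ₂))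
        / (∑ x', Real.exp ((Φ (x', y') - U (x', y')) / σ₂)))) 0 := by
    have h1 := HasDerivAt.const_mul σ₁
      (HasDerivAt.fun_sum (fun x' (_ : x' ∈ Finset.univ) => HasDerivAt.const_mul (p x') (hL1 x')))
    have h2 := HasDerivAt.const_mul σ₂
      (HasDerivAt.fun_sum (fun y' (_ : y' ∈ Finset.univ) => HasDerivAt.const_mul (q y') (hL2 y')))
    exact h1.add h2
  have hD := hglmin.hasDerivAt_eq_zero hgderiv
  set Z₁ := ∑ y', Real.exp (U (x, y') / σ₁) with hZ₁
  set Z₂ := ∑ x', Real.exp ((Φ (x', y) - U (x', y)) / σ₂) with hZ₂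
  have hZ₁pos : 0 < Z₁ := sum_exp_pos'' _
  have hZ₂pos : 0 < Z₂ := sum_exp_pos'' _
  have e1 : ∀ x' : X, (∑ y', Real.exp (U (x', y') / σ₁) * (δ (x', y') / σ₁))
      = if x' = x then Real.exp (U (x, y) / σ₁) / σ₁ else 0 := by
    intro x'
    by_cases hx : x' = x
    · subst hx
      rw [Finset.sum_eq_single y]
      · simp [hδ]
        ring
      · intro y' _ hy'
        simp [hδ, Prod.ext_iff, hy']
      · simp
    · simp only [hx, if_false]
      apply Finset.sum_eq_zero
      intro y' _
      simp [hδ, Prod.ext_iff, hx]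
  have e2 : ∀ y' : Y, (∑ x', Real.exp ((Φ (x', y') - U (x', y')) / σ₂) * (-δ (x', y') / σ₂))
      = if y' = y then -(Real.exp ((Φ (x, y) - U (x, y)) / σ₂) / σ₂) else 0 := by
    intro y'
    by_cases hy : y' = y
    · subst hy
      rw [Finset.sum_eq_single x]
      · simp [hδ]
        ring
      · intro x' _ hx'
        simp [hδ, Prod.ext_iff, hx']
      · simp
    · simp only [hy, if_false]
      apply Finset.sum_eq_zero
      intro x' _
      simp [hδ, Prod.ext_iff, hy]
  have s1 : (∑ x', p x' * ((∑ y', Real.exp (U (x', y') / σ₁) * (δ (x', y') / σ₁))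
      / (∑ y', Real.exp (U (x', y') / σ₁))))
      = p x * ((Real.exp (U (x, y) / σ₁) / σ₁) / Z₁) := by
    rw [Finset.sum_eq_single x]
    · rw [e1 x, if_pos rfl]
    · intro x' _ hx'
      rw [e1 x', if_neg hx']
      simp
    · simp
  have s2 : (∑ y', q y' * ((∑ x', Real.exp ((Φ (x', y') - U (x', y')) / σ₂) * (-δ (x', y') / σ₂))
      / (∑ x', Real.exp ((Φ (x', y') - U (x', y')) / σ₂))))
      = q y * (-(Real.exp ((Φ (x, y) - U (x, y)) / σ₂) / σ₂) / Z₂) := by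
    rw [Finset.sum_eq_single y]
    · rw [e2 y, if_pos rfl]
    · intro y' _ hy'
      rw [e2 y', if_neg hy']
      simp
    · simp
  rw [s1, s2] at hD
  have h1 := hσ₁.ne'
  have h2 := hσ₂.ne'
  have h3 := hZ₁pos.ne'
  have h4 := hZ₂pos.ne'
  field_simp at hD ⊢
  have key : (σ₁ * σ₂) * (p x * rexp (U (x, y) / σ₁) * Z₂
      - q y * rexp ((Φ (x, y) - U (x, y)) / σ₂) * Z₁) = 0 := by linear_combination (σ₁ * σ₂) * hD
  rcases mul_eq_zero.mp key with h | h
  · exact absurd h (by positivity)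
  · linarith

theorem social_welfare_primal_dual
    {X Y : Type*} [Fintype X] [Fintype Y] [Nonempty X] [Nonempty Y]
    (p : X → ℝ) (q : Y → ℝ) (hp : ∀ x, 0 < p x) (hq : ∀ y, 0 < q y)
    (hps : ∑ x, p x = 1) (hqs : ∑ y, q y = 1)
    (σ₁ σ₂ : ℝ) (hσ₁ : 0 < σ₁) (hσ₂ : 0 < σ₂) (Φ : X × Y → ℝ) :
    ∃ M : ℝ,
      IsGreatest {m : ℝ | ∃ μ : X × Y → ℝ, IsCoupling p q μ ∧
          m = (∑ x, ∑ y, μ (x, y) * Φ (x, y)) - (σ₁ + σ₂) * mutualInfo p q μ} M ∧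
      sInf {s : ℝ | ∃ U V : X × Y → ℝ,
          (∀ x y, Φ (x, y) ≤ U (x, y) + V (x, y)) ∧
          s = σ₁ * ∑ x, p x * Real.log (∑ y, Real.exp (U (x, y) / σ₁))
            + σ₂ * ∑ y, q y * Real.log (∑ x, Real.exp (V (x, y) / σ₂))}
        = M + σ₁ * entropy q + σ₂ * entropy p := by
  obtain ⟨U, hU⟩ := exists_minimizer p q hp hq hps hqs hσ₁ hσ₂ Φ
  set Z₁ : X → ℝ := fun x => ∑ y, Real.exp (U (x, y) / σ₁) with hZ₁def
  set Z₂ : Y → ℝ := fun y => ∑ x, Real.exp ((Φ (x, y) - U (x, y)) / σ₂) with hZ₂def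
  have hZ₁pos : ∀ x, 0 < Z₁ x := fun x => sum_exp_pos'' _
  have hZ₂pos : ∀ y, 0 < Z₂ y := fun y => sum_exp_pos'' _
  set μ : X × Y → ℝ := fun z => p z.1 * Real.exp (U z / σ₁) / Z₁ z.1 with hμdef
  have hstat : ∀ x y, μ (x, y) = q y * Real.exp ((Φ (x, y) - U (x, y)) / σ₂) / Z₂ y :=
    fun x y => stationarity p q σ₁ σ₂ hσ₁ hσ₂ Φ U hU x y
  have hμ0 : ∀ z, 0 ≤ μ z := fun z =>
    div_nonneg (mul_nonneg (hp z.1).le (Real.exp_pos _).le) (hZ₁pos z.1).le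
  have hμrow : ∀ x, ∑ y, μ (x, y) = p x := by
    intro x
    rw [hμdef]
    simp only
    rw [← Finset.sum_div, ← Finset.mul_sum]
    exact mul_div_cancel_right₀ (p x) (hZ₁pos x).ne'
  have hμcol : ∀ y, ∑ x, μ (x, y) = q y := by
    intro y
    rw [Finset.sum_congr rfl fun x _ => hstat x y, ← Finset.sum_div, ← Finset.mul_sum]
    exact mul_div_cancel_right₀ (q y) (hZ₂pos y).ne'
  have hμcoup : IsCoupling p q μ := ⟨hμ0, hμrow, hμcol⟩
  have hμpos : ∀ z, 0 < μ z := fun z =>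
    div_pos (mul_pos (hp z.1) (Real.exp_pos _)) (hZ₁pos z.1)
  -- the key identity: Gdual U matches the primal value of μ
  have hsplit : ∀ x y, (σ₁ + σ₂) * (μ (x, y) * Real.log (μ (x, y) / (p x * q y)))
      = μ (x, y) * Φ (x, y) - μ (x, y) * (σ₁ * Real.log (Z₁ x))
        - μ (x, y) * (σ₁ * Real.log (q y)) - μ (x, y) * (σ₂ * Real.log (Z₂ y))
        - μ (x, y) * (σ₂ * Real.log (p x)) := by
    intro x y
    have hpne := (hp x).ne'
    have hqne := (hq y).ne'
    have hZ1ne := (hZ₁pos x).ne'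
    have hZ2ne := (hZ₂pos y).ne'
    have hs1ne := hσ₁.ne'
    have hs2ne := hσ₂.ne'
    have l1 : σ₁ * Real.log (μ (x, y) / (p x * q y))
        = U (x, y) - σ₁ * Real.log (Z₁ x) - σ₁ * Real.log (q y) := by
      have h : μ (x, y) / (p x * q y) = Real.exp (U (x, y) / σ₁) / (Z₁ x * q y) := by
        rw [hμdef]
        simp only
        field_simp
      rw [h, Real.log_div (Real.exp_pos _).ne' (mul_ne_zero hZ1ne hqne),
        Real.log_mul hZ1ne hqne, Real.log_exp]
      field_simp
      ring
    have l2 : σ₂ * Real.log (μ (x, y) / (p x * q y))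
        = (Φ (x, y) - U (x, y)) - σ₂ * Real.log (Z₂ y) - σ₂ * Real.log (p x) := by
      have h : μ (x, y) / (p x * q y) = Real.exp ((Φ (x, y) - U (x, y)) / σ₂) / (Z₂ y * p x) := by
        rw [hstat x y]
        field_simp
      rw [h, Real.log_div (Real.exp_pos _).ne' (mul_ne_zero hZ2ne hpne),
        Real.log_mul hZ2ne hpne, Real.log_exp]
      field_simp
      ring
    linear_combination μ (x, y) * l1 + μ (x, y) * l2
  have hI : (σ₁ + σ₂) * mutualInfo p q μ
      = (∑ x, ∑ y, μ (x, y) * Φ (x, y))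
        - σ₁ * (∑ x, p x * Real.log (Z₁ x)) - σ₁ * (∑ y, q y * Real.log (q y))
        - σ₂ * (∑ y, q y * Real.log (Z₂ y)) - σ₂ * (∑ x, p x * Real.log (p x)) := by
    have m1 : ∑ x, ∑ y, μ (x, y) * (σ₁ * Real.log (Z₁ x))
        = σ₁ * ∑ x, p x * Real.log (Z₁ x) := by
      rw [Finset.mul_sum]
      refine Finset.sum_congr rfl fun x _ => ?_
      rw [← Finset.sum_mul, hμrow x]
      ring
    have m2 : ∑ x, ∑ y, μ (x, y) * (σ₁ * Real.log (q y))
        = σ₁ * ∑ y, q y * Real.log (q y) := by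
      rw [Finset.sum_comm, Finset.mul_sum]
      refine Finset.sum_congr rfl fun y _ => ?_
      rw [← Finset.sum_mul, hμcol y]
      ring
    have m3 : ∑ x, ∑ y, μ (x, y) * (σ₂ * Real.log (Z₂ y))
        = σ₂ * ∑ y, q y * Real.log (Z₂ y) := by
      rw [Finset.sum_comm, Finset.mul_sum]
      refine Finset.sum_congr rfl fun y _ => ?_
      rw [← Finset.sum_mul, hμcol y]
      ring
    have m4 : ∑ x, ∑ y, μ (x, y) * (σ₂ * Real.log (p x))
        = σ₂ * ∑ x, p x * Real.log (p x) := by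
      rw [Finset.mul_sum]
      refine Finset.sum_congr rfl fun x _ => ?_
      rw [← Finset.sum_mul, hμrow x]
      ring
    calc (σ₁ + σ₂) * mutualInfo p q μ
        = ∑ x, ∑ y, (σ₁ + σ₂) * (μ (x, y) * Real.log (μ (x, y) / (p x * q y))) := by
          rw [mutualInfo, Finset.mul_sum]
          exact Finset.sum_congr rfl fun x _ => Finset.mul_sum _ _ _
      _ = ∑ x, ∑ y, (μ (x, y) * Φ (x, y) - μ (x, y) * (σ₁ * Real.log (Z₁ x))
            - μ (x, y) * (σ₁ * Real.log (q y)) - μ (x, y) * (σ₂ * Real.log (Z₂ y))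
            - μ (x, y) * (σ₂ * Real.log (p x))) :=
          Finset.sum_congr rfl fun x _ => Finset.sum_congr rfl fun y _ => hsplit x y
      _ = (∑ x, ∑ y, μ (x, y) * Φ (x, y))
          - (∑ x, ∑ y, μ (x, y) * (σ₁ * Real.log (Z₁ x)))
          - (∑ x, ∑ y, μ (x, y) * (σ₁ * Real.log (q y)))
          - (∑ x, ∑ y, μ (x, y) * (σ₂ * Real.log (Z₂ y)))
          - (∑ x, ∑ y, μ (x, y) * (σ₂ * Real.log (p x))) := by
          simp only [Finset.sum_sub_distrib]
      _ = _ := by rw [m1, m2, m3, m4]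
  set M : ℝ := (∑ x, ∑ y, μ (x, y) * Φ (x, y)) - (σ₁ + σ₂) * mutualInfo p q μ with hM
  have hGU : Gdual p q σ₁ σ₂ Φ U = M + σ₁ * entropy q + σ₂ * entropy p := by
    rw [hM, Gdual, entropy, entropy]
    rw [hI]
    ring
  have hfeas : ∀ x y, Φ (x, y) ≤ U (x, y) + (fun z => Φ z - U z) (x, y) :=
    fun x y => le_of_eq (by simp)
  have hGUval : Gdual p q σ₁ σ₂ Φ U
      = σ₁ * ∑ x, p x * Real.log (∑ y, Real.exp (U (x, y) / σ₁))
        + σ₂ * ∑ y, q y * Real.log (∑ x, Real.exp ((fun z => Φ z - U z) (x, y) / σ₂)) := rfl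
  refine ⟨M, ⟨⟨μ, hμcoup, rfl⟩, ?_⟩, ?_⟩
  · rintro m ⟨ν, hν, rfl⟩
    have hw := weak_duality p q hp hq hps hqs σ₁ σ₂ hσ₁ hσ₂ Φ U (fun z => Φ z - U z)
      hfeas ν hν
    rw [← hGUval, hGU] at hw
    linarith
  · have hbdd : ∀ s ∈ {s : ℝ | ∃ U V : X × Y → ℝ,
        (∀ x y, Φ (x, y) ≤ U (x, y) + V (x, y)) ∧
        s = σ₁ * ∑ x, p x * Real.log (∑ y, Real.exp (U (x, y) / σ₁))
          + σ₂ * ∑ y, q y * Real.log (∑ x, Real.exp (V (x, y) / σ₂))},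
        M + σ₁ * entropy q + σ₂ * entropy p ≤ s := by
      rintro s ⟨U', V', hfeas', rfl⟩
      have hw := weak_duality p q hp hq hps hqs σ₁ σ₂ hσ₁ hσ₂ Φ U' V' hfeas' μ hμcoup
      rw [hM]
      linarith
    have hmem : M + σ₁ * entropy q + σ₂ * entropy p ∈ {s : ℝ | ∃ U V : X × Y → ℝ,
        (∀ x y, Φ (x, y) ≤ U (x, y) + V (x, y)) ∧
        s = σ₁ * ∑ x, p x * Real.log (∑ y, Real.exp (U (x, y) / σ₁))
          + σ₂ * ∑ y, q y * Real.log (∑ x, Real.exp (V (x, y) / σ₂))} :=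
      ⟨U, fun z => Φ z - U z, hfeas, by rw [← hGUval, hGU]⟩
    exact le_antisymm (csInf_le ⟨_, hbdd⟩ hmem) (le_csInf ⟨_, hmem⟩ hbdd)
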